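/- arXiv:1710.09594 — 8 statements merged into one kernel-verified Lean document; each statement's English description precedes it below -/
import Mathlib

section
/- Let G be a group and g0, g1, g2 ∈ G satisfying g1*g2 = g2*g1, (g0*g1)^2 = (g1*g0)^2, (g0*g2)^2 = (g2*g0)^2, and the equation g0⁻¹*g2⁻¹*g0*g2*g0*(g1*g0*g1⁻¹) = (g1*g0*g1⁻¹)*(g2*g0*g2⁻¹). Then (g1*g0*g1⁻¹)*(g2*g0*g2⁻¹) = (g2*g0*g2⁻¹)*(g1*g0*g1⁻¹). -/
theorem stmt_2 (G : Type*) [Group G] (g0 g1 g2 : G)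
    (h12 : g1 * g2 = g2 * g1)
    (h01 : (g0 * g1) ^ 2 = (g1 * g0) ^ 2)
    (h02 : (g0 * g2) ^ 2 = (g2 * g0) ^ 2)
    (heq : g0⁻¹ * g2⁻¹ * g0 * g2 * g0 * (g1 * g0 * g1⁻¹)
      = (g1 * g0 * g1⁻¹) * (g2 * g0 * g2⁻¹)) :
    (g1 * g0 * g1⁻¹) * (g2 * g0 * g2⁻¹) = (g2 * g0 * g2⁻¹) * (g1 * g0 * g1⁻¹) := by
  have h02' : g0 * (g2 * (g0 * g2)) = g2 * (g0 * (g2 * g0)) := by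
    simpa [pow_two, mul_assoc] using h02
  have key : g0⁻¹ * g2⁻¹ * g0 * g2 * g0 = g2 * g0 * g2⁻¹ := by
    apply mul_left_cancel (a := g2 * g0)
    apply mul_right_cancel (b := g2)
    simpa [mul_assoc] using h02'
  rw [key] at heq
  rw [← heq]
end

section
/- Let G be a group and a7, a8 ∈ G satisfying (a7*a8)^2 = (a8*a7)^2. Set t7 = a8⁻¹*a7*a8 and t8 = a7*a8*a7⁻¹. Then t7*t8*t7⁻¹ = a8. -/
theorem stmt_4 (G : Type*) [Group G] (a7 a8 t7 t8 : G)
    (h : (a7 * a8) ^ 2 = (a8 * a7) ^ 2)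
    (ht7 : t7 = a8⁻¹ * a7 * a8)
    (ht8 : t8 = a7 * a8 * a7⁻¹) :
    t7 * t8 * t7⁻¹ = a8 := by
  subst ht7 ht8
  simp only [pow_two] at h
  calc a8⁻¹ * a7 * a8 * (a7 * a8 * a7⁻¹) * (a8⁻¹ * a7 * a8)⁻¹
      = a8⁻¹ * (a7 * a8 * (a7 * a8)) * a7⁻¹ * a8⁻¹ * a7⁻¹ * a8 := by group
    _ = a8⁻¹ * (a8 * a7 * (a8 * a7)) * a7⁻¹ * a8⁻¹ * a7⁻¹ * a8 := by rw [h]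
    _ = a8 := by group
end

section
/- Let G be a group and b1, b2, b3, b4 ∈ G satisfying: [bi, bj] = 1 for all 1 ≤ i < j ≤ 3; [bi*b4*bi⁻¹, bj*b4*bj⁻¹] = 1 for all 1 ≤ i < j ≤ 3; and (b4*bk)^2 = (bk*b4)^2 for k = 1, 2, 3. Then b3*b4*b2*b4*b1*b4*b3*b1⁻¹*b4*b1 = b2*b4*b2⁻¹*b3*b4*b2*b4*b1*b4*b3. -/
theorem stmt_6 (G : Type*) [Group G] (b1 b2 b3 b4 : G)
    (h12 : b1 * b2 = b2 * b1) (h13 : b1 * b3 = b3 * b1) (h23 : b2 * b3 = b3 * b2)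
    (hB12 : (b1 * b4 * b1⁻¹) * (b2 * b4 * b2⁻¹) = (b2 * b4 * b2⁻¹) * (b1 * b4 * b1⁻¹))
    (hB13 : (b1 * b4 * b1⁻¹) * (b3 * b4 * b3⁻¹) = (b3 * b4 * b3⁻¹) * (b1 * b4 * b1⁻¹))
    (hB23 : (b2 * b4 * b2⁻¹) * (b3 * b4 * b3⁻¹) = (b3 * b4 * b3⁻¹) * (b2 * b4 * b2⁻¹))
    (hC1 : (b4 * b1) ^ 2 = (b1 * b4) ^ 2)
    (hC2 : (b4 * b2) ^ 2 = (b2 * b4) ^ 2)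
    (hC3 : (b4 * b3) ^ 2 = (b3 * b4) ^ 2) :
    b3 * b4 * b2 * b4 * b1 * b4 * b3 * b1⁻¹ * b4 * b1
      = b2 * b4 * b2⁻¹ * b3 * b4 * b2 * b4 * b1 * b4 * b3 := by
  have c13 : Commute b1 b3 := h13
  have r13i : b3 * b1⁻¹ = b1⁻¹ * b3 := (c13.symm.inv_right).eq
  have rC3 := hC3
  rw [pow_two, pow_two] at rC3
  calc b3 * b4 * b2 * b4 * b1 * b4 * b3 * b1⁻¹ * b4 * b1
      = (b3*b4*b2*b4*(b1*b4)) * (b3 * b1⁻¹) * (b4*b1) := by group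
    _ = (b3*b4*b2*b4*(b1*b4)) * (b1⁻¹ * b3) * (b4*b1) := by rw [r13i]
    _ = (b3*b4*b3⁻¹) * (b3 * b2) * (b4*b1*b4*b1⁻¹*b3*b4*b1) := by group
    _ = (b3*b4*b3⁻¹) * (b2 * b3) * (b4*b1*b4*b1⁻¹*b3*b4*b1) := by rw [← h23]
    _ = (b3*b4*b3⁻¹*b2*(b3*b4*b3⁻¹)*b3) * ((b1*b4*b1⁻¹) * (b3*b4*b3⁻¹)) * (b3*b1) := by
        group
    _ = (b3*b4*b3⁻¹*b2*(b3*b4*b3⁻¹)*b3) * ((b3*b4*b3⁻¹) * (b1*b4*b1⁻¹)) * (b3*b1) := by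
        rw [hB13]
    _ = (b3*b4*b3⁻¹*b2) * (b3*b4*(b3*b4)) * (b3⁻¹*(b1*b4*b1⁻¹)*b3*b1) := by group
    _ = (b3*b4*b3⁻¹*b2) * (b4*b3*(b4*b3)) * (b3⁻¹*(b1*b4*b1⁻¹)*b3*b1) := by rw [← rC3]
    _ = ((b3*b4*b3⁻¹) * (b2*b4*b2⁻¹)) * (b2*(b3*b4*b3⁻¹)*b3*(b1*b4*b1⁻¹)*b3*b1) := by
        group
    _ = ((b2*b4*b2⁻¹) * (b3*b4*b3⁻¹)) * (b2*(b3*b4*b3⁻¹)*b3*(b1*b4*b1⁻¹)*b3*b1) := by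
        rw [← hB23]
    _ = ((b2*b4*b2⁻¹)*(b3*b4*b3⁻¹)*b2*(b3*b4*b3⁻¹)) * ((b3*b1) * b4 * (b3*b1)⁻¹)
          * (b3*(b3*b1)) := by group
    _ = ((b2*b4*b2⁻¹)*(b3*b4*b3⁻¹)*b2*(b3*b4*b3⁻¹)) * ((b1*b3) * b4 * (b1*b3)⁻¹)
          * (b3*(b1*b3)) := by rw [← h13]
    _ = ((b2*b4*b2⁻¹)*(b3*b4*b3⁻¹)*b2*(b3*b4*b3⁻¹)*b1*(b3*b4*b3⁻¹)*b1⁻¹)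
          * (b3*b1) * b3 := by group
    _ = ((b2*b4*b2⁻¹)*(b3*b4*b3⁻¹)*b2*(b3*b4*b3⁻¹)*b1*(b3*b4*b3⁻¹)*b1⁻¹)
          * (b1*b3) * b3 := by rw [← h13]
    _ = ((b2*b4*b2⁻¹)*(b3*b4*b3⁻¹)*b2*(b3*b4*b3⁻¹)) * (b1*b3) * (b4*b3) := by group
    _ = ((b2*b4*b2⁻¹)*(b3*b4*b3⁻¹)*b2*(b3*b4*b3⁻¹)) * (b3*b1) * (b4*b3) := by rw [h13]
    _ = ((b2*b4*b2⁻¹)*b3*b4*b3⁻¹) * (b2*b3) * (b4*b1*b4*b3) := by group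
    _ = ((b2*b4*b2⁻¹)*b3*b4*b3⁻¹) * (b3*b2) * (b4*b1*b4*b3) := by rw [h23]
    _ = b2 * b4 * b2⁻¹ * b3 * b4 * b2 * b4 * b1 * b4 * b3 := by group
end

section
/- Let G be a group and b1, b2, b3, b4 ∈ G satisfying: [bi, bj] = 1 for all 1 ≤ i < j ≤ 3; [bi*b4*bi⁻¹, bj*b4*bj⁻¹] = 1 for all 1 ≤ i < j ≤ 3; and (b4*bk)^2 = (bk*b4)^2 for k = 1, 2, 3. Then b4 = b3⁻¹*b1*b4*b3*b4*b1*b4*b1⁻¹*b4⁻¹*b3⁻¹*b4⁻¹*b1⁻¹*b3. -/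
theorem stmt_7 (G : Type*) [Group G] (b1 b2 b3 b4 : G)
    (h12 : b1 * b2 = b2 * b1) (h13 : b1 * b3 = b3 * b1) (h23 : b2 * b3 = b3 * b2)
    (hB12 : (b1 * b4 * b1⁻¹) * (b2 * b4 * b2⁻¹) = (b2 * b4 * b2⁻¹) * (b1 * b4 * b1⁻¹))
    (hB13 : (b1 * b4 * b1⁻¹) * (b3 * b4 * b3⁻¹) = (b3 * b4 * b3⁻¹) * (b1 * b4 * b1⁻¹))
    (hB23 : (b2 * b4 * b2⁻¹) * (b3 * b4 * b3⁻¹) = (b3 * b4 * b3⁻¹) * (b2 * b4 * b2⁻¹))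
    (hC1 : (b4 * b1) ^ 2 = (b1 * b4) ^ 2)
    (hC2 : (b4 * b2) ^ 2 = (b2 * b4) ^ 2)
    (hC3 : (b4 * b3) ^ 2 = (b3 * b4) ^ 2) :
    b4 = b3⁻¹ * b1 * b4 * b3 * b4 * b1 * b4 * b1⁻¹ * b4⁻¹ * b3⁻¹ * b4⁻¹ * b1⁻¹ * b3 := by
  have c13 : Commute b1 b3 := h13
  have h31a : b3 * b1⁻¹ = b1⁻¹ * b3 := c13.inv_left.eq.symm
  have h13b : b1 * b3⁻¹ = b3⁻¹ * b1 := c13.inv_right.eq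
  have hc : b4 * b1 * (b4 * b1) = b1 * b4 * (b1 * b4) := by rw [← sq, ← sq, hC1]
  have e1 : b4 * b1 * b4 * b1⁻¹ = b1⁻¹ * b4 * b1 * b4 := by
    calc b4 * b1 * b4 * b1⁻¹ = b1⁻¹ * (b1 * b4 * (b1 * b4)) * b1⁻¹ := by group
    _ = b1⁻¹ * (b4 * b1 * (b4 * b1)) * b1⁻¹ := by rw [hc]
    _ = b1⁻¹ * b4 * b1 * b4 := by group
  have main : b1 * b4 * b3 * b4 * b1 * b4 * b1⁻¹ * b4⁻¹ * b3⁻¹ * b4⁻¹ * b1⁻¹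
      = b3 * b4 * b3⁻¹ := by
    calc b1 * b4 * b3 * b4 * b1 * b4 * b1⁻¹ * b4⁻¹ * b3⁻¹ * b4⁻¹ * b1⁻¹
        = b1 * b4 * b3 * (b4 * b1 * b4 * b1⁻¹) * (b4⁻¹ * b3⁻¹ * b4⁻¹ * b1⁻¹) := by group
      _ = b1 * b4 * b3 * (b1⁻¹ * b4 * b1 * b4) * (b4⁻¹ * b3⁻¹ * b4⁻¹ * b1⁻¹) := by rw [e1]
      _ = b1 * b4 * (b3 * b1⁻¹) * (b4 * (b1 * b3⁻¹) * (b4⁻¹ * b1⁻¹)) := by group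
      _ = b1 * b4 * (b1⁻¹ * b3) * (b4 * (b3⁻¹ * b1) * (b4⁻¹ * b1⁻¹)) := by rw [h31a, h13b]
      _ = (b1 * b4 * b1⁻¹) * (b3 * b4 * b3⁻¹) * (b1 * b4⁻¹ * b1⁻¹) := by group
      _ = (b3 * b4 * b3⁻¹) * (b1 * b4 * b1⁻¹) * (b1 * b4⁻¹ * b1⁻¹) := by rw [hB13]
      _ = b3 * b4 * b3⁻¹ := by group
  rw [show (b3⁻¹ * b1 * b4 * b3 * b4 * b1 * b4 * b1⁻¹ * b4⁻¹ * b3⁻¹ * b4⁻¹ * b1⁻¹ * b3 : G)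
      = b3⁻¹ * (b1 * b4 * b3 * b4 * b1 * b4 * b1⁻¹ * b4⁻¹ * b3⁻¹ * b4⁻¹ * b1⁻¹) * b3 from by
        group, main]
  group
end

section
/- Let G be a group and b1, b2, b3, b4 ∈ G satisfying: [bi, bj] = 1 for all 1 ≤ i < j ≤ 3; [bi*b4*bi⁻¹, bj*b4*bj⁻¹] = 1 for all 1 ≤ i < j ≤ 3; and (b4*bk)^2 = (bk*b4)^2 for k = 1, 2, 3. Then b2 commutes with b4*b3*b4*b2*b4*b3*b4, i.e. b2*(b4*b3*b4*b2*b4*b3*b4) = (b4*b3*b4*b2*b4*b3*b4)*b2. -/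
theorem stmt_8 (G : Type*) [Group G] (b1 b2 b3 b4 : G)
    (h12 : b1 * b2 = b2 * b1) (h13 : b1 * b3 = b3 * b1) (h23 : b2 * b3 = b3 * b2)
    (hB12 : (b1 * b4 * b1⁻¹) * (b2 * b4 * b2⁻¹) = (b2 * b4 * b2⁻¹) * (b1 * b4 * b1⁻¹))
    (hB13 : (b1 * b4 * b1⁻¹) * (b3 * b4 * b3⁻¹) = (b3 * b4 * b3⁻¹) * (b1 * b4 * b1⁻¹))
    (hB23 : (b2 * b4 * b2⁻¹) * (b3 * b4 * b3⁻¹) = (b3 * b4 * b3⁻¹) * (b2 * b4 * b2⁻¹))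
    (hC1 : (b4 * b1) ^ 2 = (b1 * b4) ^ 2)
    (hC2 : (b4 * b2) ^ 2 = (b2 * b4) ^ 2)
    (hC3 : (b4 * b3) ^ 2 = (b3 * b4) ^ 2) :
    b2 * (b4 * b3 * b4 * b2 * b4 * b3 * b4) = (b4 * b3 * b4 * b2 * b4 * b3 * b4) * b2 := by
  have c2 : b4 * b2 * b4 * b2 = b2 * b4 * b2 * b4 := by
    have := hC2; simpa [pow_two, mul_assoc] using this
  have c3 : b4 * b3 * b4 * b3 = b3 * b4 * b3 * b4 := by
    have := hC3; simpa [pow_two, mul_assoc] using this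
  calc b2 * (b4 * b3 * b4 * b2 * b4 * b3 * b4)
    _ = (b2 * b4 * b3 * b4 * b2 * b4 * b2⁻¹) * (b2 * b3) * (b4) := by group
    _ = (b2 * b4 * b3 * b4 * b2 * b4 * b2⁻¹) * (b3 * b2) * (b4) := by rw [h23]
    _ = (b2) * (b4 * b3 * b4 * b3) * (b3⁻¹ * b2 * b4 * b2⁻¹ * b3 * b2 * b4) := by group
    _ = (b2) * (b3 * b4 * b3 * b4) * (b3⁻¹ * b2 * b4 * b2⁻¹ * b3 * b2 * b4) := by rw [c3]
    _ = (b2 * b3 * b4) * (b3 * b4 * b3⁻¹ * (b2 * b4 * b2⁻¹)) * (b3 * b2 * b4) := by group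
    _ = (b2 * b3 * b4) * (b2 * b4 * b2⁻¹ * (b3 * b4 * b3⁻¹)) * (b3 * b2 * b4) := by rw [← hB23]
    _ = (b2 * b3 * b4 * b2 * b4 * b2⁻¹ * b2⁻¹) * (b2 * b3) * (b4 * b2 * b4) := by group
    _ = (b2 * b3 * b4 * b2 * b4 * b2⁻¹ * b2⁻¹) * (b3 * b2) * (b4 * b2 * b4) := by rw [h23]
    _ = (b2 * b3 * b2⁻¹) * (b2 * b4 * b2 * b4) * (b2⁻¹ * b2⁻¹ * b3 * b2 * b4 * b2 * b4) := by group
    _ = (b2 * b3 * b2⁻¹) * (b4 * b2 * b4 * b2) * (b2⁻¹ * b2⁻¹ * b3 * b2 * b4 * b2 * b4) := by rw [← c2]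
    _ = (1) * (b2 * b3) * (b2⁻¹ * b4 * b2 * b4 * b2⁻¹ * b3 * b2 * b4 * b2 * b4) := by group
    _ = (1) * (b3 * b2) * (b2⁻¹ * b4 * b2 * b4 * b2⁻¹ * b3 * b2 * b4 * b2 * b4) := by rw [h23]
    _ = (1) * (b3 * b4 * b3 * b4) * (b4⁻¹ * b3⁻¹ * b2 * b4 * b2⁻¹ * b3 * b2 * b4 * b2 * b4) := by group
    _ = (1) * (b4 * b3 * b4 * b3) * (b4⁻¹ * b3⁻¹ * b2 * b4 * b2⁻¹ * b3 * b2 * b4 * b2 * b4) := by rw [← c3]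
    _ = (b4 * b3 * b4 * b3 * b4⁻¹ * b3⁻¹ * b2 * b4 * b2⁻¹ * b3) * (b2 * b4 * b2 * b4) * (1) := by group
    _ = (b4 * b3 * b4 * b3 * b4⁻¹ * b3⁻¹ * b2 * b4 * b2⁻¹ * b3) * (b4 * b2 * b4 * b2) * (1) := by rw [← c2]
    _ = (b4 * b3 * b4 * b3 * b4⁻¹ * b3⁻¹) * (b2 * b4 * b2⁻¹ * (b3 * b4 * b3⁻¹)) * (b3 * b2 * b4 * b2) := by group
    _ = (b4 * b3 * b4 * b3 * b4⁻¹ * b3⁻¹) * (b3 * b4 * b3⁻¹ * (b2 * b4 * b2⁻¹)) * (b3 * b2 * b4 * b2) := by rw [hB23]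
    _ = (b4 * b3 * b4 * b2 * b4 * b2⁻¹) * (b3 * b2) * (b4 * b2) := by group
    _ = (b4 * b3 * b4 * b2 * b4 * b2⁻¹) * (b2 * b3) * (b4 * b2) := by rw [← h23]
    _ = (b4 * b3 * b4 * b2 * b4 * b3 * b4) * b2 := by group
end

section
/- Let G be a group and b1, b2, b3, b4 ∈ G satisfying: [bi, bj] = 1 for all 1 ≤ i < j ≤ 3; [bi*b4*bi⁻¹, bj*b4*bj⁻¹] = 1 for all 1 ≤ i < j ≤ 3; and (b4*bk)^2 = (bk*b4)^2 for k = 1, 2, 3. Then [b4*b2*b4*b3*b4*b2*b4, b3] = 1. -/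
open scoped commutatorElement

theorem stmt_9 (G : Type*) [Group G] (b1 b2 b3 b4 : G)
    (h12 : b1 * b2 = b2 * b1) (h13 : b1 * b3 = b3 * b1) (h23 : b2 * b3 = b3 * b2)
    (hB12 : (b1 * b4 * b1⁻¹) * (b2 * b4 * b2⁻¹) = (b2 * b4 * b2⁻¹) * (b1 * b4 * b1⁻¹))
    (hB13 : (b1 * b4 * b1⁻¹) * (b3 * b4 * b3⁻¹) = (b3 * b4 * b3⁻¹) * (b1 * b4 * b1⁻¹))
    (hB23 : (b2 * b4 * b2⁻¹) * (b3 * b4 * b3⁻¹) = (b3 * b4 * b3⁻¹) * (b2 * b4 * b2⁻¹))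
    (hC1 : (b4 * b1) ^ 2 = (b1 * b4) ^ 2)
    (hC2 : (b4 * b2) ^ 2 = (b2 * b4) ^ 2)
    (hC3 : (b4 * b3) ^ 2 = (b3 * b4) ^ 2) :
    ⁅b4 * b2 * b4 * b3 * b4 * b2 * b4, b3⁆ = 1 := by
  have hC2' : b4*b2*(b4*b2) = b2*b4*(b2*b4) := by
    have := hC2; rw [pow_two, pow_two] at this; exact this
  have hC3' : b4*b3*(b4*b3) = b3*b4*(b3*b4) := by
    have := hC3; rw [pow_two, pow_two] at this; exact this
  -- commutation variants of h23
  have hv : b2⁻¹*b3 = b3*b2⁻¹ := by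
    calc b2⁻¹*b3 = b2⁻¹*(b3*b2)*b2⁻¹ := by group
      _ = b2⁻¹*(b2*b3)*b2⁻¹ := by rw [h23]
      _ = b3*b2⁻¹ := by group
  have hw : b3⁻¹*b2 = b2*b3⁻¹ := by
    calc b3⁻¹*b2 = b3⁻¹*(b2*b3)*b3⁻¹ := by group
      _ = b3⁻¹*(b3*b2)*b3⁻¹ := by rw [h23]
      _ = b2*b3⁻¹ := by group
  -- F1 : γ2 * a = a * β2
  have F1 : b2⁻¹*b4*b2*b4 = b4*(b2*b4*b2⁻¹) := by
    calc b2⁻¹*b4*b2*b4 = b2⁻¹*(b4*b2*(b4*b2))*b2⁻¹ := by group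
      _ = b2⁻¹*(b2*b4*(b2*b4))*b2⁻¹ := by rw [hC2']
      _ = b4*(b2*b4*b2⁻¹) := by group
  have F1' : b2⁻¹*b4⁻¹*b2*b4 = b4*(b2*b4⁻¹*b2⁻¹) := by
    calc b2⁻¹*b4⁻¹*b2*b4 = (b4*b2)⁻¹*(b2*b4*(b2*b4))*(b2*b4)⁻¹ := by group
      _ = (b4*b2)⁻¹*(b4*b2*(b4*b2))*(b2*b4)⁻¹ := by rw [hC2']
      _ = b4*(b2*b4⁻¹*b2⁻¹) := by group
  have F2 : b3⁻¹*b4*b3*b4 = b4*(b3*b4*b3⁻¹) := by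
    calc b3⁻¹*b4*b3*b4 = b3⁻¹*(b4*b3*(b4*b3))*b3⁻¹ := by group
      _ = b3⁻¹*(b3*b4*(b3*b4))*b3⁻¹ := by rw [hC3']
      _ = b4*(b3*b4*b3⁻¹) := by group
  have F2' : b3⁻¹*b4⁻¹*b3*b4 = b4*(b3*b4⁻¹*b3⁻¹) := by
    calc b3⁻¹*b4⁻¹*b3*b4 = (b4*b3)⁻¹*(b3*b4*(b3*b4))*(b3*b4)⁻¹ := by group
      _ = (b4*b3)⁻¹*(b4*b3*(b4*b3))*(b3*b4)⁻¹ := by rw [hC3']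
      _ = b4*(b3*b4⁻¹*b3⁻¹) := by group
  -- SS : s a t γ2 = t a s γ3
  have SS : b2*b4*b3*(b2⁻¹*b4*b2) = b3*b4*b2*(b3⁻¹*b4*b3) := by
    calc b2*b4*b3*(b2⁻¹*b4*b2)
        = b2*b4*((b3*b2⁻¹)*(b4*b2)) := by group
      _ = b2*b4*((b2⁻¹*b3)*(b4*b2)) := by rw [← hv]
      _ = b2*b4*b2⁻¹*(b3*b4*b3⁻¹)*(b3*b2) := by group
      _ = b3*b4*b3⁻¹*(b2*b4*b2⁻¹)*(b3*b2) := by rw [hB23]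
      _ = b3*b4*b3⁻¹*(b2*b4)*((b2⁻¹*b3)*b2) := by group
      _ = b3*b4*b3⁻¹*(b2*b4)*((b3*b2⁻¹)*b2) := by rw [hv]
      _ = b3*b4*((b3⁻¹*b2)*(b4*b3)) := by group
      _ = b3*b4*((b2*b3⁻¹)*(b4*b3)) := by rw [hw]
      _ = b3*b4*b2*(b3⁻¹*b4*b3) := by group
  -- G1 : w * s = s * w
  have G1 : (b4*b2*b4*b3*b4*b2*b4)*b2 = b2*(b4*b2*b4*b3*b4*b2*b4) := by
    calc (b4*b2*b4*b3*b4*b2*b4)*b2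
        = b4*b2*b4*b3*(b4*b2*(b4*b2)) := by group
      _ = b4*b2*b4*b3*(b2*b4*(b2*b4)) := by rw [hC2']
      _ = b4*b2*b4*(b3*b2)*(b4*b2*b4) := by group
      _ = b4*b2*b4*(b2*b3)*(b4*b2*b4) := by rw [← h23]
      _ = b4*b2*(b4*b2)*(b3*(b4*b2*b4)) := by group
      _ = b2*b4*(b2*b4)*(b3*(b4*b2*b4)) := by rw [hC2']
      _ = b2*(b4*b2*b4*b3*b4*b2*b4) := by group
  -- G2 : r = satasat = tasatas
  have G2 : b2*b4*b3*b4*b2*b4*b3 = b3*b4*b2*b4*b3*b4*b2 := by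
    calc b2*b4*b3*b4*b2*b4*b3
        = (b2*b4*b3*(b2⁻¹*b4*b2)) * ((b2⁻¹*b4⁻¹*b2*b4) * (b2*b4*b3)) := by group
      _ = (b3*b4*b2*(b3⁻¹*b4*b3)) * ((b2⁻¹*b4⁻¹*b2*b4) * (b2*b4*b3)) := by rw [SS]
      _ = (b3*b4*b2*(b3⁻¹*b4*b3)) * ((b4*(b2*b4⁻¹*b2⁻¹)) * (b2*b4*b3)) := by rw [F1']
      _ = b3*b4*b2*((b3⁻¹*b4*b3*b4) * (b2*b4⁻¹*b2⁻¹*(b2*b4*b3))) := by group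
      _ = b3*b4*b2*((b4*(b3*b4*b3⁻¹)) * (b2*b4⁻¹*b2⁻¹*(b2*b4*b3))) := by rw [F2]
      _ = b3*b4*b2*b4*(b3*b4*b3⁻¹)*(b2*b3) := by group
      _ = b3*b4*b2*b4*(b3*b4*b3⁻¹)*(b3*b2) := by rw [h23]
      _ = b3*b4*b2*b4*b3*b4*b2 := by group
  -- E : r = s a s a t a s a t s⁻¹ a⁻¹
  have E : b2*b4*b3*b4*b2*b4*b3
      = b2*b4*b2*b4*b3*b4*b2*b4*(b3*b2⁻¹)*b4⁻¹ := by
    calc b2*b4*b3*b4*b2*b4*b3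
        = (b2*b4)*((b3*b4*b2*(b3⁻¹*b4*b3)) * ((b3⁻¹*b4⁻¹*b3*b4)*b3)) := by group
      _ = (b2*b4)*((b2*b4*b3*(b2⁻¹*b4*b2)) * ((b3⁻¹*b4⁻¹*b3*b4)*b3)) := by rw [← SS]
      _ = (b2*b4)*((b2*b4*b3*(b2⁻¹*b4*b2)) * ((b4*(b3*b4⁻¹*b3⁻¹))*b3)) := by rw [F2']
      _ = (b2*b4)*(b2*b4*b3)*((b2⁻¹*b4*b2*b4) * (b3*b4⁻¹*b3⁻¹*b3)) := by group
      _ = (b2*b4)*(b2*b4*b3)*((b4*(b2*b4*b2⁻¹)) * (b3*b4⁻¹*b3⁻¹*b3)) := by rw [F1]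
      _ = b2*b4*b2*b4*b3*b4*b2*b4*(b2⁻¹*b3)*b4⁻¹ := by group
      _ = b2*b4*b2*b4*b3*b4*b2*b4*(b3*b2⁻¹)*b4⁻¹ := by rw [hv]
  -- G3 : s a r = r a s
  have G3 : b2*(b4*(b2*b4*b3*b4*b2*b4*b3)) = (b2*b4*b3*b4*b2*b4*b3)*(b4*b2) := by
    have : (b2*b4*b3*b4*b2*b4*b3)*(b4*b2) = b2*(b4*(b2*b4*b3*b4*b2*b4*b3)) := by
      calc (b2*b4*b3*b4*b2*b4*b3)*(b4*b2)
          = (b2*b4*b2*b4*b3*b4*b2*b4*(b3*b2⁻¹)*b4⁻¹)*(b4*b2) := by rw [E]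
        _ = b2*(b4*(b2*b4*b3*b4*b2*b4*b3)) := by group
    exact this.symm
  -- assemble : s (w t) = s (t w)
  have key : b2*((b4*b2*b4*b3*b4*b2*b4)*b3) = b2*(b3*(b4*b2*b4*b3*b4*b2*b4)) := by
    calc b2*((b4*b2*b4*b3*b4*b2*b4)*b3)
        = b2*(b4*(b2*b4*b3*b4*b2*b4*b3)) := by group
      _ = (b2*b4*b3*b4*b2*b4*b3)*(b4*b2) := G3
      _ = (b3*b4*b2*b4*b3*b4*b2)*(b4*b2) := by rw [G2]
      _ = b3*((b4*b2*b4*b3*b4*b2*b4)*b2) := by group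
      _ = b3*(b2*(b4*b2*b4*b3*b4*b2*b4)) := by rw [G1]
      _ = (b3*b2)*(b4*b2*b4*b3*b4*b2*b4) := by group
      _ = (b2*b3)*(b4*b2*b4*b3*b4*b2*b4) := by rw [← h23]
      _ = b2*(b3*(b4*b2*b4*b3*b4*b2*b4)) := by group
  have hcomm : (b4*b2*b4*b3*b4*b2*b4)*b3 = b3*(b4*b2*b4*b3*b4*b2*b4) :=
    mul_left_cancel key
  rw [commutatorElement_def, hcomm]
  group
end

section
/- Let n ≥ 2 and let r1, ..., r_{n-1} be positive real numbers satisfying r_{n-1} < 1/4 and r_k < r_{k+1}/4 for 1 ≤ k ≤ n-2. For a = (a1,...,a_{n-1}) ∈ {0,1}^{n-1} define t_a = (1 - ∑_{k=1}^{n-1} (-1)^{a_k} √(r_k))². Then t_a < t_{a'} if and only if there exists an index r such that a_i = a'_i for all i = r+1, ..., n-1, a_r = 0, and a'_r = 1. -/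
open Finset

private lemma sq_lt_iff'' {x y : ℝ} (hx : 0 ≤ x) (hy : 0 ≤ y) : x ^ 2 < y ^ 2 ↔ x < y := by
  constructor <;> intro h <;> nlinarith

theorem stmt_13 (n : ℕ) (hn : 2 ≤ n) (r : ℕ → ℝ)
    (hpos : ∀ k, 1 ≤ k → k ≤ n - 1 → 0 < r k)
    (hlast : r (n - 1) < 1 / 4)
    (hdec : ∀ k, 1 ≤ k → k ≤ n - 2 → r k < r (k + 1) / 4)
    (a a' : ℕ → Bool) :
    (1 - ∑ k ∈ Finset.Icc 1 (n - 1),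
        (if a k then (-1 : ℝ) else 1) * Real.sqrt (r k)) ^ 2
      < (1 - ∑ k ∈ Finset.Icc 1 (n - 1),
        (if a' k then (-1 : ℝ) else 1) * Real.sqrt (r k)) ^ 2
    ↔ ∃ m, 1 ≤ m ∧ m ≤ n - 1 ∧ (∀ i, m + 1 ≤ i → i ≤ n - 1 → a i = a' i)
        ∧ a m = false ∧ a' m = true := by
  have hN1 : 1 ≤ n - 1 := by omega
  have hs0 : ∀ k, 0 ≤ Real.sqrt (r k) := fun k => Real.sqrt_nonneg _
  have hspos : ∀ k, 1 ≤ k → k ≤ n - 1 → 0 < Real.sqrt (r k) :=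
    fun k h1 h2 => Real.sqrt_pos.2 (hpos k h1 h2)
  have hsq : ∀ k, 1 ≤ k → k ≤ n - 1 → Real.sqrt (r k) ^ 2 = r k :=
    fun k h1 h2 => Real.sq_sqrt (hpos k h1 h2).le
  have hstep : ∀ k, 1 ≤ k → k + 1 ≤ n - 1 → 2 * Real.sqrt (r k) < Real.sqrt (r (k + 1)) := by
    intro k h1 h2
    have hd := hdec k h1 (by omega)
    have e1 := hsq k h1 (by omega)
    have e2 := hsq (k + 1) (by omega) h2
    have h3 : (2 * Real.sqrt (r k)) ^ 2 < Real.sqrt (r (k + 1)) ^ 2 := by nlinarith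
    exact (sq_lt_iff'' (by positivity) (hs0 _)).1 h3
  have hgeo : ∀ j, j + 1 ≤ n - 1 →
      ∑ k ∈ Icc 1 j, Real.sqrt (r k) < Real.sqrt (r (j + 1)) := by
    intro j
    induction j with
    | zero =>
      intro h
      rw [show Icc 1 0 = (∅ : Finset ℕ) from Icc_eq_empty (by omega), sum_empty]
      exact hspos 1 le_rfl h
    | succ j ih =>
      intro h
      rw [Finset.sum_Icc_succ_top (by omega : 1 ≤ j + 1)]
      have h1 := ih (by omega)
      have h2 := hstep (j + 1) (by omega) h
      linarith
  have habs : ∀ b : ℕ → Bool,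
      |∑ k ∈ Icc 1 (n - 1), (if b k then (-1 : ℝ) else 1) * Real.sqrt (r k)| < 1 := by
    intro b
    have hT : ∑ k ∈ Icc 1 (n - 1), Real.sqrt (r k) < 1 := by
      obtain ⟨M, hM⟩ : ∃ M, n - 1 = M + 1 := ⟨n - 2, by omega⟩
      rw [hM, Finset.sum_Icc_succ_top (by omega : 1 ≤ M + 1)]
      have h1 := hgeo M (by omega)
      have h2 : Real.sqrt (r (M + 1)) < 1 / 2 := by
        have e2 := hsq (M + 1) (by omega) (by omega)
        have h3 : Real.sqrt (r (M + 1)) ^ 2 < (1 / 2 : ℝ) ^ 2 := by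
          rw [e2]; rw [hM] at hlast; nlinarith
        exact (sq_lt_iff'' (hs0 _) (by norm_num)).1 h3
      linarith
    calc |∑ k ∈ Icc 1 (n - 1), (if b k then (-1 : ℝ) else 1) * Real.sqrt (r k)|
        ≤ ∑ k ∈ Icc 1 (n - 1), |(if b k then (-1 : ℝ) else 1) * Real.sqrt (r k)| :=
          Finset.abs_sum_le_sum_abs _ _
      _ = ∑ k ∈ Icc 1 (n - 1), Real.sqrt (r k) := by
          apply Finset.sum_congr rfl
          intro k _
          rw [abs_mul, abs_of_nonneg (hs0 k)]
          cases b k <;> simp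
      _ < 1 := hT
  have key : ∀ (b b' : ℕ → Bool) (m : ℕ), 1 ≤ m → m ≤ n - 1 →
      (∀ i, m + 1 ≤ i → i ≤ n - 1 → b i = b' i) → b m = false → b' m = true →
      ∑ k ∈ Icc 1 (n - 1), (if b' k then (-1 : ℝ) else 1) * Real.sqrt (r k)
        < ∑ k ∈ Icc 1 (n - 1), (if b k then (-1 : ℝ) else 1) * Real.sqrt (r k) := by
    intro b b' m hm1 hmN hag hb hb'
    rw [← sub_pos, ← Finset.sum_sub_distrib]
    have hsubeq : ∀ k, (if b k then (-1 : ℝ) else 1) * Real.sqrt (r k)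
        - (if b' k then (-1 : ℝ) else 1) * Real.sqrt (r k)
        = ((if b k then (-1 : ℝ) else 1) - (if b' k then (-1 : ℝ) else 1)) * Real.sqrt (r k) := by
      intro k; ring
    simp only [hsubeq]
    have hred : ∑ k ∈ Icc 1 m,
        ((if b k then (-1 : ℝ) else 1) - (if b' k then (-1 : ℝ) else 1)) * Real.sqrt (r k)
        = ∑ k ∈ Icc 1 (n - 1),
        ((if b k then (-1 : ℝ) else 1) - (if b' k then (-1 : ℝ) else 1)) * Real.sqrt (r k) := by
      apply Finset.sum_subset (Finset.Icc_subset_Icc_right hmN)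
      intro x hx hx'
      simp only [Finset.mem_Icc] at hx hx'
      have hx2 : b x = b' x := hag x (by omega) hx.2
      rw [hx2, sub_self, zero_mul]
    rw [← hred]
    obtain ⟨j, rfl⟩ : ∃ j, m = j + 1 := ⟨m - 1, by omega⟩
    rw [Finset.sum_Icc_succ_top (by omega : 1 ≤ j + 1)]
    have hgm : ((if b (j + 1) then (-1 : ℝ) else 1) - (if b' (j + 1) then (-1 : ℝ) else 1))
        * Real.sqrt (r (j + 1)) = 2 * Real.sqrt (r (j + 1)) := by
      rw [hb, hb']; norm_num
    rw [hgm]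
    have hlow : ∀ k ∈ Icc 1 j,
        -(2 * Real.sqrt (r k)) ≤ ((if b k then (-1 : ℝ) else 1)
          - (if b' k then (-1 : ℝ) else 1)) * Real.sqrt (r k) := by
      intro k _
      have h1 : (-2 : ℝ) ≤ (if b k then (-1 : ℝ) else 1) - (if b' k then (-1 : ℝ) else 1) := by
        cases b k <;> cases b' k <;> norm_num
      nlinarith [hs0 k]
    have hsum := Finset.sum_le_sum hlow
    rw [Finset.sum_neg_distrib, ← Finset.mul_sum] at hsum
    have hB := hgeo j (by omega)
    have hspos' := hspos (j + 1) (by omega) hmN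
    linarith
  have h1 := abs_lt.1 (habs a)
  have h2 := abs_lt.1 (habs a')
  rw [sq_lt_iff'' (by linarith [h1.2]) (by linarith [h2.2]), sub_lt_sub_iff_left]
  constructor
  · intro hlt
    set F := (Icc 1 (n - 1)).filter (fun k => a k ≠ a' k) with hF
    have hFne : F.Nonempty := by
      rw [hF, Finset.filter_nonempty_iff]
      by_contra hc
      push_neg at hc
      have heq : ∑ k ∈ Icc 1 (n - 1), (if a' k then (-1 : ℝ) else 1) * Real.sqrt (r k)
          = ∑ k ∈ Icc 1 (n - 1), (if a k then (-1 : ℝ) else 1) * Real.sqrt (r k) := by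
        apply Finset.sum_congr rfl
        intro k hk
        rw [hc k hk]
      linarith
    set m := F.max' hFne with hm
    have hmF : m ∈ F := F.max'_mem hFne
    rw [hF, Finset.mem_filter, Finset.mem_Icc] at hmF
    obtain ⟨⟨hm1, hmN⟩, hne⟩ := hmF
    have hag : ∀ i, m + 1 ≤ i → i ≤ n - 1 → a i = a' i := by
      intro i hi1 hi2
      by_contra hc
      have hiF : i ∈ F := by
        rw [hF]; exact Finset.mem_filter.2 ⟨Finset.mem_Icc.2 ⟨by omega, hi2⟩, hc⟩
      have := Finset.le_max' F i hiF
      omega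
    cases ham : a m <;> cases ham' : a' m
    · exact absurd (ham.trans ham'.symm) hne
    · exact ⟨m, hm1, hmN, hag, ham, ham'⟩
    · exfalso
      have := key a' a m hm1 hmN (fun i h1 h2 => (hag i h1 h2).symm) ham' ham
      linarith
    · exact absurd (ham.trans ham'.symm) hne
  · rintro ⟨m, hm1, hmN, hag, hma, hma'⟩
    exact key a a' m hm1 hmN hag hma hma'
end

section
/- Let G be a group and let x, y, z, w, u ∈ G satisfy the relations z*x*y = y*z*x = x*y*z (i.e., λ0^{(i)} λi λ0 = λ0 λ0^{(i)} λi = λi λ0 λ0^{(i)} with x = λi, y = λ0, z = λ0^{(i)}), u*z*w = w*u*z = z*w*u (i.e., λj λ0^{(i)} λ0^{(ij)} = λ0^{(ij)} λj λ0^{(i)} with u = λj, w = λ0^{(ij)}), and [w, x*y*x⁻¹] = 1. Then [w, u*y*u⁻¹] = 1. -/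
open scoped commutatorElement

theorem stmt_18 (G : Type*) [Group G] (x y z w u : G)
    (h1 : z * x * y = y * z * x) (h1' : y * z * x = x * y * z)
    (h2 : u * z * w = w * u * z) (h2' : w * u * z = z * w * u)
    (h3 : ⁅w, x * y * x⁻¹⁆ = 1) :
    ⁅w, u * y * u⁻¹⁆ = 1 := by
  rw [commutatorElement_eq_one_iff_mul_comm] at h3 ⊢
  have key : z⁻¹ * y * z = x * y * x⁻¹ := by
    calc z⁻¹ * y * z = z⁻¹ * (y * z * x) * x⁻¹ := by group
    _ = z⁻¹ * (z * x * y) * x⁻¹ := by rw [h1.symm]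
    _ = x * y * x⁻¹ := by group
  have key2 : u⁻¹ * w * u = z * w * z⁻¹ := by
    calc u⁻¹ * w * u = u⁻¹ * (w * u * z) * z⁻¹ := by group
    _ = u⁻¹ * (u * z * w) * z⁻¹ := by rw [← h2]
    _ = z * w * z⁻¹ := by group
  calc w * (u * y * u⁻¹) = u * (u⁻¹ * w * u) * y * u⁻¹ := by group
  _ = u * (z * w * z⁻¹) * y * u⁻¹ := by rw [key2]
  _ = u * z * (w * (z⁻¹ * y * z)) * z⁻¹ * u⁻¹ := by group
  _ = u * z * (w * (x * y * x⁻¹)) * z⁻¹ * u⁻¹ := by rw [key]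
  _ = u * z * ((x * y * x⁻¹) * w) * z⁻¹ * u⁻¹ := by rw [h3]
  _ = u * z * ((z⁻¹ * y * z) * w) * z⁻¹ * u⁻¹ := by rw [key]
  _ = u * (y * (z * w * z⁻¹)) * u⁻¹ := by group
  _ = u * (y * (u⁻¹ * w * u)) * u⁻¹ := by rw [key2]
  _ = (u * y * u⁻¹) * w := by group
end
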